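/- arXiv:2208.07826 — 10 statements merged into one kernel-verified Lean document; each statement's English description precedes it below -/
import Mathlib

section
/- Let Λ = (λ₀, λ₁) be a family of sets with an inequality over a set with an inequality (I, =_I, ≠_I). Assume that ≠_I is an apartness relation (symmetric and cotransitive), that (I, =_I, ≠_I) is discrete (for all i, j: i =_I j or i ≠_I j), and that for every i ∈ I the inequality ≠_{λ₀(i)} is an apartness relation. Then the inequality of the Sigma-set of Λ is an apartness relation: it never holds together with the Sigma-equality, it is symmetric, and it is cotransitive. -/
/-- If the index set with inequality is discrete and its inequality is an
apartness relation, and the inequality of every fiber is an apartness relation, then the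
inequality of the Sigma-set of the family is an apartness relation. -/
theorem sigmaSet_apartness {I : Type*} (eqI neqI : I → I → Prop)
    (eqI_equiv : Equivalence eqI)
    (neqI_ineq1 : ∀ i j, eqI i j → neqI i j → False)
    (neqI_symm : ∀ i j, neqI i j → neqI j i)
    (neqI_cotrans : ∀ i j, neqI i j → ∀ k, neqI k i ∨ neqI k j)
    (discI : ∀ i j, eqI i j ∨ neqI i j)
    (lam : I → Type*)
    (eqL neqL : ∀ i, lam i → lam i → Prop)
    (eqL_equiv : ∀ i, Equivalence (eqL i))
    (neqL_ineq1 : ∀ i (x y : lam i), eqL i x y → neqL i x y → False)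
    (neqL_symm : ∀ i (x y : lam i), neqL i x y → neqL i y x)
    (neqL_cotrans : ∀ i (x y : lam i), neqL i x y → ∀ z, neqL i z x ∨ neqL i z y)
    (tr : ∀ i j, eqI i j → lam i → lam j)
    (tr_eq : ∀ i j (h : eqI i j) (x x' : lam i),
      eqL i x x' → eqL j (tr i j h x) (tr i j h x'))
    (tr_se : ∀ i j (h : eqI i j) (x x' : lam i),
      neqL j (tr i j h x) (tr i j h x') → neqL i x x')
    (tr_id : ∀ i (h : eqI i i) (x : lam i), eqL i (tr i i h x) x)
    (tr_comp : ∀ i j k (hij : eqI i j) (hjk : eqI j k) (hik : eqI i k) (x : lam i),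
      eqL k (tr j k hjk (tr i j hij x)) (tr i k hik x)) :
    -- the Sigma-inequality never holds together with the Sigma-equality
    (∀ p q : Σ i, lam i,
      (∃ h : eqI p.1 q.1, eqL q.1 (tr p.1 q.1 h p.2) q.2) →
      (neqI p.1 q.1 ∨ ∃ h : eqI p.1 q.1, neqL q.1 (tr p.1 q.1 h p.2) q.2) → False) ∧
    -- the Sigma-inequality is symmetric
    (∀ p q : Σ i, lam i,
      (neqI p.1 q.1 ∨ ∃ h : eqI p.1 q.1, neqL q.1 (tr p.1 q.1 h p.2) q.2) →
      (neqI q.1 p.1 ∨ ∃ h : eqI q.1 p.1, neqL p.1 (tr q.1 p.1 h q.2) p.2)) ∧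
    -- the Sigma-inequality is cotransitive
    (∀ p q : Σ i, lam i,
      (neqI p.1 q.1 ∨ ∃ h : eqI p.1 q.1, neqL q.1 (tr p.1 q.1 h p.2) q.2) →
      ∀ r : Σ i, lam i,
        (neqI r.1 p.1 ∨ ∃ h : eqI r.1 p.1, neqL p.1 (tr r.1 p.1 h r.2) p.2) ∨
        (neqI r.1 q.1 ∨ ∃ h : eqI r.1 q.1, neqL q.1 (tr r.1 q.1 h r.2) q.2)) := by
  have compat : ∀ i (x x' y : lam i), eqL i x x' → neqL i x y → neqL i x' y := by
    intro i x x' y hxx' hxy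
    rcases neqL_cotrans i x y hxy x' with h | h
    · exact absurd h (fun h => neqL_ineq1 i x' x ((eqL_equiv i).symm hxx') h)
    · exact h
  refine ⟨?_, ?_, ?_⟩
  · rintro ⟨i, x⟩ ⟨j, y⟩ ⟨h, he⟩ (hn | ⟨h', hn⟩)
    · exact neqI_ineq1 i j h hn
    · exact neqL_ineq1 j _ _ he hn
  · rintro ⟨i, x⟩ ⟨j, y⟩ (hn | ⟨h, hn⟩)
    · exact Or.inl (neqI_symm i j hn)
    · refine Or.inr ⟨eqI_equiv.symm h, ?_⟩
      have h' := eqI_equiv.symm h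
      apply tr_se i j h
      have key : eqL j (tr i j h (tr j i h' y)) y :=
        (eqL_equiv j).trans (tr_comp j i j h' h (eqI_equiv.refl j) y) (tr_id j _ y)
      exact compat j y _ _ ((eqL_equiv j).symm key) (neqL_symm j _ _ hn)
  · rintro ⟨i, x⟩ ⟨j, y⟩ (hn | ⟨h, hn⟩) ⟨k, z⟩
    · rcases neqI_cotrans i j hn k with h | h
      · exact Or.inl (Or.inl h)
      · exact Or.inr (Or.inl h)
    · rcases discI k i with hki | hki
      · have hkj : eqI k j := eqI_equiv.trans hki h
        rcases neqL_cotrans j (tr i j h x) y hn (tr k j hkj z) with hc | hc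
        · refine Or.inl (Or.inr ⟨hki, ?_⟩)
          apply tr_se i j h
          exact compat j _ _ _ ((eqL_equiv j).symm (tr_comp k i j hki h hkj z)) hc
        · exact Or.inr (Or.inr ⟨hkj, hc⟩)
      · exact Or.inl (Or.inl hki)
end

section
/- Let X be a set with an equivalence relation =_X, let (Y, =_Y, ≠_Y; G) be a completely separated set, and let 𝔽(X,Y) be the set of =_X-to-=_Y equality-preserving functions from X to Y. For x ∈ X and g ∈ G let φ_{x,g} : 𝔽(X,Y) → ℝ be defined by φ_{x,g}(h) := g(h(x)), and put F→G := {φ_{x,g} | x ∈ X, g ∈ G}. Then: (1) for all h, h' ∈ 𝔽(X,Y), h ≠_{(𝔽(X,Y), F→G)} h' if and only if there exists x ∈ X with h(x) ≠_{(Y,G)} h'(x); (2) if h =_{(𝔽(X,Y), F→G)} h', then h(x) =_Y h'(x) for every x ∈ X; in particular the inequality induced by F→G is tight with respect to pointwise =_Y-equality of functions. -/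
/-- The function set 𝔽(X,Y) (the =_X-to-=_Y equality-preserving functions,
here a subtype) with the set of functions F→G := {φ_{x,g} | x ∈ X, g ∈ G},
φ_{x,g}(h) = g(h(x)), is completely separated: the induced inequality is the pointwise
exists-inequality, and the induced equality implies pointwise =_Y-equality (tightness). -/
theorem funSpace_completely_separated {X Y : Type*}
    (eqX : X → X → Prop) (eqX_equiv : Equivalence eqX)
    (eqY neqY : Y → Y → Prop) (eqY_equiv : Equivalence eqY)
    (G : Set (Y → ℝ))
    (hG_pres : ∀ g ∈ G, ∀ y y', eqY y y' → g y = g y')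
    (hneqY : ∀ y y', neqY y y' ↔ ∃ g ∈ G, g y ≠ g y')
    (hG_tight : ∀ y y', (∀ g ∈ G, g y = g y') → eqY y y')
    (FtoG : Set ({h : X → Y // ∀ x x', eqX x x' → eqY (h x) (h x')} → ℝ))
    (hFtoG : FtoG = {φ | ∃ x : X, ∃ g ∈ G, φ = fun h => g (h.1 x)}) :
    -- (1) the induced inequality is the pointwise "exists" inequality
    (∀ h h' : {h : X → Y // ∀ x x', eqX x x' → eqY (h x) (h x')},
      (∃ φ ∈ FtoG, φ h ≠ φ h') ↔ ∃ x : X, ∃ g ∈ G, g (h.1 x) ≠ g (h'.1 x)) ∧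
    -- (2) tightness: the induced equality implies pointwise =_Y equality
    (∀ h h' : {h : X → Y // ∀ x x', eqX x x' → eqY (h x) (h x')},
      (∀ φ ∈ FtoG, φ h = φ h') → ∀ x : X, eqY (h.1 x) (h'.1 x)) := by
  subst hFtoG
  constructor
  · intro h h'
    constructor
    · rintro ⟨φ, ⟨x, g, hg, rfl⟩, hne⟩
      exact ⟨x, g, hg, hne⟩
    · rintro ⟨x, g, hg, hne⟩
      exact ⟨fun h => g (h.1 x), ⟨x, g, hg, rfl⟩, hne⟩
  · intro h h' heq x
    apply hG_tight
    intro g hg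
    exact heq (fun h => g (h.1 x)) ⟨x, g, hg, rfl⟩
end

section
/- Let S = (λ₀, λ₁; φ₀, φ₁) be a family of completely separated sets over a completely separated set (I, =_I, ≠_I; K), and let Π_{i∈I} λ₀(i) be the Pi-set of the underlying family, consisting of dependent functions Θ with Θ_i ∈ λ₀(i) and Θ_j =_{λ₀(j)} λ_{ij}(Θ_i) whenever i =_I j. Let ⊗_{i∈I} F_i := {Θ ↦ f(Θ_i) | i ∈ I, f ∈ F_i} be the corresponding set of real-valued functions on the Pi-set. Then: (1) for all Θ, Θ' in the Pi-set, Θ ≠_{(Π, ⊗F_i)} Θ' if and only if there exists i ∈ I with Θ_i ≠_{λ₀(i)} Θ'_i; and (2) the induced inequality is tight: if Θ =_{(Π, ⊗F_i)} Θ', then Θ_i =_{λ₀(i)} Θ'_i for every i ∈ I. Hence the Pi-set with these structures is a completely separated set. -/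
/-- The Pi-set of a family of completely separated sets, equipped with the
function set ⊗_{i∈I} F_i := {Θ ↦ f(Θ_i) | i ∈ I, f ∈ F_i}, is a completely separated set:
the induced inequality is the "exists at some index" inequality, and it is tight. -/
theorem piSet_completely_separated {I : Type*}
    (eqI neqI : I → I → Prop) (eqI_equiv : Equivalence eqI)
    (K : Set (I → ℝ))
    (hK_pres : ∀ k ∈ K, ∀ i j, eqI i j → k i = k j)
    (hneqI : ∀ i j, neqI i j ↔ ∃ k ∈ K, k i ≠ k j)
    (hK_tight : ∀ i j, (∀ k ∈ K, k i = k j) → eqI i j)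
    (lam : I → Type*)
    (eqL neqL : ∀ i, lam i → lam i → Prop)
    (eqL_equiv : ∀ i, Equivalence (eqL i))
    (F : ∀ i, Set (lam i → ℝ))
    (hF_pres : ∀ i, ∀ f ∈ F i, ∀ x x', eqL i x x' → f x = f x')
    (hneqL : ∀ i (x x' : lam i), neqL i x x' ↔ ∃ f ∈ F i, f x ≠ f x')
    (hF_tight : ∀ i (x x' : lam i), (∀ f ∈ F i, f x = f x') → eqL i x x')
    (tr : ∀ i j, eqI i j → lam i → lam j)
    (tr_eq : ∀ i j (h : eqI i j) (x x' : lam i),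
      eqL i x x' → eqL j (tr i j h x) (tr i j h x'))
    (tr_se : ∀ i j (h : eqI i j) (x x' : lam i),
      neqL j (tr i j h x) (tr i j h x') → neqL i x x')
    (tr_id : ∀ i (h : eqI i i) (x : lam i), eqL i (tr i i h x) x)
    (tr_comp : ∀ i j k (hij : eqI i j) (hjk : eqI j k) (hik : eqI i k) (x : lam i),
      eqL k (tr j k hjk (tr i j hij x)) (tr i k hik x))
    (phi_mem : ∀ i j (hji : eqI j i), ∀ f ∈ F i, (fun y => f (tr j i hji y)) ∈ F j)
    (tensorF : Set ({Θ : ∀ i, lam i //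
        ∀ i j (h : eqI i j), eqL j (Θ j) (tr i j h (Θ i))} → ℝ))
    (htensorF : tensorF = {φ | ∃ i, ∃ f ∈ F i, φ = fun Θ => f (Θ.1 i)}) :
    -- (1) the induced inequality on the Pi-set
    (∀ Θ Θ' : {Θ : ∀ i, lam i // ∀ i j (h : eqI i j), eqL j (Θ j) (tr i j h (Θ i))},
      (∃ φ ∈ tensorF, φ Θ ≠ φ Θ') ↔ ∃ i, neqL i (Θ.1 i) (Θ'.1 i)) ∧
    -- (2) tightness w.r.t. the pointwise equality of the Pi-set
    (∀ Θ Θ' : {Θ : ∀ i, lam i // ∀ i j (h : eqI i j), eqL j (Θ j) (tr i j h (Θ i))},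
      (∀ φ ∈ tensorF, φ Θ = φ Θ') → ∀ i, eqL i (Θ.1 i) (Θ'.1 i)) := by
  subst htensorF
  constructor
  · intro Θ Θ'
    constructor
    · rintro ⟨φ, ⟨i, f, hf, rfl⟩, hne⟩
      exact ⟨i, (hneqL i _ _).2 ⟨f, hf, hne⟩⟩
    · rintro ⟨i, hi⟩
      obtain ⟨f, hf, hne⟩ := (hneqL i _ _).1 hi
      exact ⟨fun Θ => f (Θ.1 i), ⟨i, f, hf, rfl⟩, hne⟩
  · intro Θ Θ' h i
    exact hF_tight i _ _ fun f hf => h (fun Θ => f (Θ.1 i)) ⟨i, f, hf, rfl⟩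
end

section
/- Let (I, =_I, ≠_I; K) be a discrete completely separated set and S = (λ₀, λ₁; φ₀, φ₁) a family of completely separated sets over it. On the Sigma-set, consider the functions k̂ : (i,x) ↦ k(i) for k ∈ K, and Φ̂ : (i,x) ↦ Φ_i(x) for Φ ∈ Π_{i∈I} F_i. Then, for all (i,x), (j,y) in the Sigma-set: if some function in K̂ ∪ Ĥ takes different real values at (i,x) and at (j,y), then (i,x) ≠ (j,y) in the Sigma-set, i.e., i ≠_I j, or i =_I j and λ_{ij}(x) ≠_{λ₀(j)} y. -/
/-- Over a discrete completely separated index set, if some function in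
K̂ ∪ Ĥ takes different values at (i,x) and (j,y), then (i,x) ≠ (j,y) in the Sigma-set. -/
theorem sigma_hatKH_implies_sigmaNeq {I : Type*}
    (eqI neqI : I → I → Prop) (eqI_equiv : Equivalence eqI)
    (K : Set (I → ℝ))
    (hK_pres : ∀ k ∈ K, ∀ i j, eqI i j → k i = k j)
    (hneqI : ∀ i j, neqI i j ↔ ∃ k ∈ K, k i ≠ k j)
    (hK_tight : ∀ i j, (∀ k ∈ K, k i = k j) → eqI i j)
    (discI : ∀ i j, eqI i j ∨ neqI i j)
    (lam : I → Type*)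
    (eqL neqL : ∀ i, lam i → lam i → Prop)
    (eqL_equiv : ∀ i, Equivalence (eqL i))
    (F : ∀ i, Set (lam i → ℝ))
    (hF_pres : ∀ i, ∀ f ∈ F i, ∀ x x', eqL i x x' → f x = f x')
    (hneqL : ∀ i (x x' : lam i), neqL i x x' ↔ ∃ f ∈ F i, f x ≠ f x')
    (hF_tight : ∀ i (x x' : lam i), (∀ f ∈ F i, f x = f x') → eqL i x x')
    (tr : ∀ i j, eqI i j → lam i → lam j)
    (tr_eq : ∀ i j (h : eqI i j) (x x' : lam i),
      eqL i x x' → eqL j (tr i j h x) (tr i j h x'))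
    (tr_se : ∀ i j (h : eqI i j) (x x' : lam i),
      neqL j (tr i j h x) (tr i j h x') → neqL i x x')
    (tr_id : ∀ i (h : eqI i i) (x : lam i), eqL i (tr i i h x) x)
    (tr_comp : ∀ i j k (hij : eqI i j) (hjk : eqI j k) (hik : eqI i k) (x : lam i),
      eqL k (tr j k hjk (tr i j hij x)) (tr i k hik x))
    (phi_mem : ∀ i j (hji : eqI j i), ∀ f ∈ F i, (fun y => f (tr j i hji y)) ∈ F j) :
    ∀ p q : Σ i, lam i,
      -- some k̂ (k ∈ K) or some Φ̂ (Φ ∈ Π_{i∈I} F_i) separates (i,x) from (j,y)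
      ((∃ k ∈ K, k p.1 ≠ k q.1) ∨
       (∃ Φ : ∀ i, lam i → ℝ,
         ((∀ i, Φ i ∈ F i) ∧
          (∀ i j (hji : eqI j i) (y : lam j), Φ j y = Φ i (tr j i hji y))) ∧
         Φ p.1 p.2 ≠ Φ q.1 q.2)) →
      -- the Sigma-inequality
      (neqI p.1 q.1 ∨ ∃ h : eqI p.1 q.1, neqL q.1 (tr p.1 q.1 h p.2) q.2) := by
  rintro ⟨i, x⟩ ⟨j, y⟩ hsep
  rcases discI i j with h | h
  · right
    refine ⟨h, ?_⟩
    rcases hsep with ⟨k, hk, hne⟩ | ⟨Φ, ⟨hmem, hcompat⟩, hne⟩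
    · exact absurd (hK_pres k hk i j h) hne
    · rw [hneqL]
      refine ⟨Φ j, hmem j, ?_⟩
      have h1 : Φ j (tr i j h x) = Φ i (tr j i (eqI_equiv.symm h) (tr i j h x)) :=
        hcompat i j (eqI_equiv.symm h) _
      have h2 : eqL i (tr j i (eqI_equiv.symm h) (tr i j h x)) x := by
        have := tr_comp i j i h (eqI_equiv.symm h) (eqI_equiv.refl i) x
        exact (eqL_equiv i).trans this (tr_id i _ x)
      have h3 : Φ i (tr j i (eqI_equiv.symm h) (tr i j h x)) = Φ i x :=
        hF_pres i (Φ i) (hmem i) _ _ h2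
      rw [h1, h3]
      exact hne
  · exact Or.inl h
end

section
/- Let (I, =_I, ≠_I; K) be a discrete completely separated set and S = (λ₀, λ₁; φ₀, φ₁) a family of completely separated sets over it. Assume that for every j ∈ I and every h ∈ F_j there exists Φ ∈ Π_{i∈I} F_i with Φ_j = h (as functions on λ₀(j)). Then, for all (i,x), (j,y) in the Sigma-set: if (i,x) ≠ (j,y) in the Sigma-set (i.e., i ≠_I j, or i =_I j and λ_{ij}(x) ≠_{λ₀(j)} y), then some function in K̂ ∪ Ĥ takes different real values at (i,x) and at (j,y). -/
/-- Over a discrete completely separated index set, assuming every h ∈ F_j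
extends to some Φ ∈ Π_{i∈I} F_i, if (i,x) ≠ (j,y) in the Sigma-set, then some function in
K̂ ∪ Ĥ takes different values at (i,x) and (j,y). -/
theorem sigma_sigmaNeq_implies_hatKH {I : Type*}
    (eqI neqI : I → I → Prop) (eqI_equiv : Equivalence eqI)
    (K : Set (I → ℝ))
    (hK_pres : ∀ k ∈ K, ∀ i j, eqI i j → k i = k j)
    (hneqI : ∀ i j, neqI i j ↔ ∃ k ∈ K, k i ≠ k j)
    (hK_tight : ∀ i j, (∀ k ∈ K, k i = k j) → eqI i j)
    (discI : ∀ i j, eqI i j ∨ neqI i j)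
    (lam : I → Type*)
    (eqL neqL : ∀ i, lam i → lam i → Prop)
    (eqL_equiv : ∀ i, Equivalence (eqL i))
    (F : ∀ i, Set (lam i → ℝ))
    (hF_pres : ∀ i, ∀ f ∈ F i, ∀ x x', eqL i x x' → f x = f x')
    (hneqL : ∀ i (x x' : lam i), neqL i x x' ↔ ∃ f ∈ F i, f x ≠ f x')
    (hF_tight : ∀ i (x x' : lam i), (∀ f ∈ F i, f x = f x') → eqL i x x')
    (tr : ∀ i j, eqI i j → lam i → lam j)
    (tr_eq : ∀ i j (h : eqI i j) (x x' : lam i),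
      eqL i x x' → eqL j (tr i j h x) (tr i j h x'))
    (tr_se : ∀ i j (h : eqI i j) (x x' : lam i),
      neqL j (tr i j h x) (tr i j h x') → neqL i x x')
    (tr_id : ∀ i (h : eqI i i) (x : lam i), eqL i (tr i i h x) x)
    (tr_comp : ∀ i j k (hij : eqI i j) (hjk : eqI j k) (hik : eqI i k) (x : lam i),
      eqL k (tr j k hjk (tr i j hij x)) (tr i k hik x))
    (phi_mem : ∀ i j (hji : eqI j i), ∀ f ∈ F i, (fun y => f (tr j i hji y)) ∈ F j)
    -- every h ∈ F_j extends to some Φ ∈ Π_{i∈I} F_i with Φ_j = h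
    (hext : ∀ j, ∀ h ∈ F j, ∃ Φ : ∀ i, lam i → ℝ,
      ((∀ i, Φ i ∈ F i) ∧
       (∀ i j' (hji : eqI j' i) (y : lam j'), Φ j' y = Φ i (tr j' i hji y))) ∧
      ∀ y : lam j, Φ j y = h y) :
    ∀ p q : Σ i, lam i,
      -- the Sigma-inequality
      (neqI p.1 q.1 ∨ ∃ h : eqI p.1 q.1, neqL q.1 (tr p.1 q.1 h p.2) q.2) →
      -- implies: some k̂ (k ∈ K) or some Φ̂ (Φ ∈ Π_{i∈I} F_i) separates (i,x) from (j,y)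
      ((∃ k ∈ K, k p.1 ≠ k q.1) ∨
       (∃ Φ : ∀ i, lam i → ℝ,
         ((∀ i, Φ i ∈ F i) ∧
          (∀ i j (hji : eqI j i) (y : lam j), Φ j y = Φ i (tr j i hji y))) ∧
         Φ p.1 p.2 ≠ Φ q.1 q.2)) := by
  rintro ⟨i, x⟩ ⟨j, y⟩ (hne | ⟨hij, hne⟩)
  · exact Or.inl ((hneqI i j).1 hne)
  · right
    obtain ⟨f, hfF, hfne⟩ := (hneqL j (tr i j hij x) y).1 hne
    obtain ⟨Φ, hΦ, hΦj⟩ := hext j f hfF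
    refine ⟨Φ, hΦ, ?_⟩
    have : Φ i x = f (tr i j hij x) := by
      rw [hΦ.2 j i hij x, hΦj]
    simp only [this, hΦj]
    exact hfne
end

section
/- Let (I, =_I, ≠_I; K) be a completely separated set and S* = (λ₀, λ₁*; φ₀, φ₁*) a global family of completely separated sets over it. On the Sigma-set of S*, let K̂ := {(i,x) ↦ k(i) | k ∈ K} and Ĥ := {(i,x) ↦ Φ_i(x) | Φ ∈ Π_{i∈I} F_i}, where Π_{i∈I} F_i consists of the dependent functions Φ with Φ_i ∈ F_i and Φ_k = Φ_i ∘ λ*_{ki} whenever i =_I k. Then: (1) for all (i,x), (j,y), some function in K̂ ∪ Ĥ takes different values at (i,x) and (j,y) if and only if (i,x) ≠ (j,y) in the Sigma-set of S* (i.e., k(i) ≠ k(j) for some k ∈ K, or λ*_{ij}(x) ≠_{λ₀(j)} y); and (2) this inequality is tight: if every function in K̂ ∪ Ĥ takes equal values at (i,x) and (j,y), then i =_I j and λ*_{ij}(x) =_{λ₀(j)} y. Hence the Sigma-set of S*, equipped with K̂ ∪ Ĥ, is a completely separated set. -/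
/-- The Sigma-set of a global family of completely separated sets, equipped
with the functions K̂ ∪ Ĥ, is a completely separated set: the inequality induced by
K̂ ∪ Ĥ coincides with the Sigma-inequality, and it is tight. -/
theorem global_sigma_completely_separated {I : Type*}
    (eqI neqI : I → I → Prop) (eqI_equiv : Equivalence eqI)
    (K : Set (I → ℝ))
    (hK_pres : ∀ k ∈ K, ∀ i j, eqI i j → k i = k j)
    (hneqI : ∀ i j, neqI i j ↔ ∃ k ∈ K, k i ≠ k j)
    (hK_tight : ∀ i j, (∀ k ∈ K, k i = k j) → eqI i j)
    (lam : I → Type*)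
    (eqL neqL : ∀ i, lam i → lam i → Prop)
    (eqL_equiv : ∀ i, Equivalence (eqL i))
    (F : ∀ i, Set (lam i → ℝ))
    (hF_pres : ∀ i, ∀ f ∈ F i, ∀ x x', eqL i x x' → f x = f x')
    (hneqL : ∀ i (x x' : lam i), neqL i x x' ↔ ∃ f ∈ F i, f x ≠ f x')
    (hF_tight : ∀ i (x x' : lam i), (∀ f ∈ F i, f x = f x') → eqL i x x')
    -- global transport maps, defined for every pair (i,j)
    (tr : ∀ i j, lam i → lam j)
    (tr_eq : ∀ i j (x x' : lam i), eqL i x x' → eqL j (tr i j x) (tr i j x'))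
    (tr_se : ∀ i j (x x' : lam i), neqL j (tr i j x) (tr i j x') → neqL i x x')
    (tr_id : ∀ i (x : lam i), eqL i (tr i i x) x)
    (tr_comp : ∀ i j, eqI i j → ∀ k (x : lam i), eqL k (tr j k (tr i j x)) (tr i k x))
    (phi_mem : ∀ i j, ∀ f ∈ F i, (fun y => f (tr j i y)) ∈ F j) :
    -- (1) the inequality induced by K̂ ∪ Ĥ coincides with the Sigma-inequality
    (∀ p q : Σ i, lam i,
      ((∃ k ∈ K, k p.1 ≠ k q.1) ∨
       (∃ Φ : ∀ i, lam i → ℝ,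
         ((∀ i, Φ i ∈ F i) ∧
          (∀ i k, eqI i k → ∀ y : lam k, Φ k y = Φ i (tr k i y))) ∧
         Φ p.1 p.2 ≠ Φ q.1 q.2)) ↔
      ((∃ k ∈ K, k p.1 ≠ k q.1) ∨ neqL q.1 (tr p.1 q.1 p.2) q.2)) ∧
    -- (2) tightness: equality under all functions of K̂ ∪ Ĥ gives the Sigma-equality
    (∀ p q : Σ i, lam i,
      ((∀ k ∈ K, k p.1 = k q.1) ∧
       (∀ Φ : ∀ i, lam i → ℝ,
         ((∀ i, Φ i ∈ F i) ∧
          (∀ i k, eqI i k → ∀ y : lam k, Φ k y = Φ i (tr k i y))) →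
         Φ p.1 p.2 = Φ q.1 q.2)) →
      eqI p.1 q.1 ∧ eqL q.1 (tr p.1 q.1 p.2) q.2) := by
  classical
  -- helper: from f ∈ F j₀ build a global Φ
  have mkPhi : ∀ (j₀ : I) (f : lam j₀ → ℝ), f ∈ F j₀ →
      (∀ i, (fun y => f (tr i j₀ y)) ∈ F i) ∧
      (∀ i k, eqI i k → ∀ y : lam k,
        (fun y => f (tr k j₀ y)) y = (fun y => f (tr i j₀ y)) (tr k i y)) := by
    intro j₀ f hf
    refine ⟨fun i => phi_mem j₀ i f hf, fun i k hik y => ?_⟩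
    have h := tr_comp k i (eqI_equiv.symm hik) j₀ y
    exact (hF_pres j₀ f hf _ _ h).symm
  constructor
  · intro p q
    constructor
    · rintro (h | ⟨Φ, ⟨hmem, hcoh⟩, hne⟩)
      · exact Or.inl h
      · by_cases hij : eqI p.1 q.1
        · right
          have : Φ p.1 p.2 = Φ q.1 (tr p.1 q.1 p.2) := by
            have := hcoh q.1 p.1 (eqI_equiv.symm hij) p.2
            -- Φ p.1 p.2 = Φ q.1 (tr p.1 q.1 p.2)
            exact this
          rw [hneqL]
          exact ⟨Φ q.1, hmem q.1, by rw [← this]; exact hne⟩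
        · left
          by_contra hno
          push_neg at hno
          exact hij (hK_tight _ _ fun k hk => hno k hk)
    · rintro (h | h)
      · exact Or.inl h
      · right
        rw [hneqL] at h
        obtain ⟨f, hf, hne⟩ := h
        obtain ⟨hmem, hcoh⟩ := mkPhi q.1 f hf
        refine ⟨fun i y => f (tr i q.1 y), ⟨hmem, hcoh⟩, ?_⟩
        have hq : f (tr q.1 q.1 q.2) = f q.2 :=
          hF_pres q.1 f hf _ _ (tr_id q.1 q.2)
        simpa [hq] using hne
  · intro p q ⟨hKeq, hΦeq⟩
    have hij : eqI p.1 q.1 := hK_tight _ _ hKeq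
    refine ⟨hij, hF_tight _ _ _ fun f hf => ?_⟩
    obtain ⟨hmem, hcoh⟩ := mkPhi q.1 f hf
    have h := hΦeq (fun i y => f (tr i q.1 y)) ⟨hmem, hcoh⟩
    have hq : f (tr q.1 q.1 q.2) = f q.2 :=
      hF_pres q.1 f hf _ _ (tr_id q.1 q.2)
    simpa [hq] using h
end

section
/- Let (X, =_X) be a set with an equivalence relation, 𝔽(X) the set of all =_X-preserving real-valued functions on X, and let the free completely separated set on X be εX := (X, =_{(X,𝔽(X))}, ≠_{(X,𝔽(X))}; 𝔽(X)). Then εX has the universal property of freeness: for every completely separated set (Y, =_Y, ≠_Y; G) and every =_X-preserving function h : X → Y, the same map h, viewed as a map from εX to Y, (1) preserves the equality =_{(X,𝔽(X))}: x =_{(X,𝔽(X))} x' implies h(x) =_Y h(x'); and (2) is strongly extensional: h(x) ≠_{(Y,G)} h(x') implies x ≠_{(X,𝔽(X))} x'; moreover it is the unique strongly extensional function εX → Y agreeing pointwise with h. -/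
/-- Universal property of the free completely separated set
εX := (X, =_{(X,𝔽(X))}, ≠_{(X,𝔽(X))}; 𝔽(X)), where 𝔽(X) is the set of ALL
=_X-preserving real-valued functions on X: every =_X-preserving function h : X → Y
into a completely separated set (Y, =_Y, ≠_Y; G), viewed as a map from εX,
preserves the induced equality, is strongly extensional, and is the unique strongly
extensional map εX → Y agreeing pointwise with h. -/
theorem free_completely_separated_universal {X Y : Type*}
    (eqX : X → X → Prop) (eqX_equiv : Equivalence eqX)
    (FX : Set (X → ℝ))
    (hFX : FX = {f : X → ℝ | ∀ x x', eqX x x' → f x = f x'})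
    (eqY neqY : Y → Y → Prop) (eqY_equiv : Equivalence eqY)
    (G : Set (Y → ℝ))
    (hG_pres : ∀ g ∈ G, ∀ y y', eqY y y' → g y = g y')
    (hneqY : ∀ y y', neqY y y' ↔ ∃ g ∈ G, g y ≠ g y')
    (hG_tight : ∀ y y', (∀ g ∈ G, g y = g y') → eqY y y')
    (h : X → Y)
    (h_pres : ∀ x x', eqX x x' → eqY (h x) (h x')) :
    -- (1) h preserves the equality induced by 𝔽(X)
    (∀ x x', (∀ f ∈ FX, f x = f x') → eqY (h x) (h x')) ∧
    -- (2) h is strongly extensional w.r.t. ≠_{(Y,G)} and ≠_{(X,𝔽(X))}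
    (∀ x x', (∃ g ∈ G, g (h x) ≠ g (h x')) → ∃ f ∈ FX, f x ≠ f x') ∧
    -- uniqueness: any two strongly extensional maps εX → Y agreeing pointwise with h
    -- agree pointwise with each other (w.r.t. =_Y)
    (∀ h₁ h₂ : X → Y,
      (∀ x x', (∃ g ∈ G, g (h₁ x) ≠ g (h₁ x')) → ∃ f ∈ FX, f x ≠ f x') →
      (∀ x x', (∃ g ∈ G, g (h₂ x) ≠ g (h₂ x')) → ∃ f ∈ FX, f x ≠ f x') →
      (∀ x, eqY (h₁ x) (h x)) → (∀ x, eqY (h₂ x) (h x)) →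
      ∀ x, eqY (h₁ x) (h₂ x)) := by
  have comp_mem : ∀ g ∈ G, (fun x => g (h x)) ∈ FX := by
    intro g hg
    rw [hFX]
    exact fun x x' hx => hG_pres g hg _ _ (h_pres x x' hx)
  refine ⟨?_, ?_, ?_⟩
  · intro x x' hall
    exact hG_tight _ _ fun g hg => hall _ (comp_mem g hg)
  · rintro x x' ⟨g, hg, hne⟩
    exact ⟨_, comp_mem g hg, hne⟩
  · intro h₁ h₂ _ _ e1 e2 x
    exact eqY_equiv.trans (e1 x) (eqY_equiv.symm (e2 x))
end

section
/- Let (X, =_X) be a set with an equivalence relation, 𝔽(X) the set of all =_X-preserving real-valued functions on X, and (Y, =_Y, ≠_Y; G) a completely separated set. Then for every function h : X → Y, the following are equivalent: (a) h preserves =_X (x =_X x' implies h(x) =_Y h(x')); (b) h preserves the induced equality =_{(X,𝔽(X))} and is strongly extensional with respect to ≠_{(X,𝔽(X))} and ≠_{(Y,G)} (h(x) ≠_{(Y,G)} h(x') implies x ≠_{(X,𝔽(X))} x'). In other words, the set of =_X-preserving functions X → Y coincides with the set of strongly extensional, equality-preserving functions from the free completely separated set εX := (X, =_{(X,𝔽(X))},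 ≠_{(X,𝔽(X))}; 𝔽(X)) to (Y, =_Y, ≠_Y; G). -/
/-- Hom-set identification for the Free ⊣ Forgetful adjunction: a function
h : X → Y into a completely separated set (Y, =_Y, ≠_Y; G) preserves =_X if and only if
it preserves the equality induced by 𝔽(X) and is strongly extensional w.r.t.
≠_{(X,𝔽(X))} and ≠_{(Y,G)}, where 𝔽(X) is the set of ALL =_X-preserving real-valued
functions on X. -/
theorem free_adjunction_hom_sets {X Y : Type*}
    (eqX : X → X → Prop) (eqX_equiv : Equivalence eqX)
    (FX : Set (X → ℝ))
    (hFX : FX = {f : X → ℝ | ∀ x x', eqX x x' → f x = f x'})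
    (eqY neqY : Y → Y → Prop) (eqY_equiv : Equivalence eqY)
    (G : Set (Y → ℝ))
    (hG_pres : ∀ g ∈ G, ∀ y y', eqY y y' → g y = g y')
    (hneqY : ∀ y y', neqY y y' ↔ ∃ g ∈ G, g y ≠ g y')
    (hG_tight : ∀ y y', (∀ g ∈ G, g y = g y') → eqY y y') :
    ∀ h : X → Y,
      (∀ x x', eqX x x' → eqY (h x) (h x')) ↔
      ((∀ x x', (∀ f ∈ FX, f x = f x') → eqY (h x) (h x')) ∧
       (∀ x x', (∃ g ∈ G, g (h x) ≠ g (h x')) → ∃ f ∈ FX, f x ≠ f x')) := by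
  intro h
  constructor
  · intro hp
    have hcomp : ∀ g ∈ G, (fun x => g (h x)) ∈ FX := by
      intro g hg
      rw [hFX]
      intro x x' hxx
      exact hG_pres g hg _ _ (hp x x' hxx)
    constructor
    · intro x x' hall
      apply hG_tight
      intro g hg
      exact hall _ (hcomp g hg)
    · rintro x x' ⟨g, hg, hne⟩
      exact ⟨fun x => g (h x), hcomp g hg, hne⟩
  · rintro ⟨h1, _⟩ x x' hxx
    apply h1
    intro f hf
    rw [hFX] at hf
    exact hf x x' hxx
end

section
/- Let (X, =_X; F) be a function space and (Y, =_Y, ≠_Y; G) a completely separated set, and let h : X → Y be an affine map, i.e., h preserves =_X and g ∘ h ∈ F for every g ∈ G. Then h preserves the induced equality =_{(X,F)}: if x =_{(X,F)} x', then h(x) =_Y h(x'). Consequently h defines a map ρh from the Stone–Čech companion ρ_F X := (X, =_{(X,F)}, ≠_{(X,F)}; F) to (Y, =_Y, ≠_Y; G), which is affine, strongly extensional, and is the unique function from ρ_F X to Y agreeing pointwise with h. -/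
/-- Set-theoretic Stone–Čech theorem, part (ii): an affine map h from a
function space (X, =_X; F) to a completely separated set (Y, =_Y, ≠_Y; G) preserves the
induced equality =_{(X,F)}, so it defines a map ρh from ρ_F X := (X, =_{(X,F)},
≠_{(X,F)}; F) to Y, which is affine, strongly extensional, and is the unique map from
ρ_F X to Y agreeing pointwise with h. -/
theorem stoneCech_factorization {X Y : Type*}
    (eqX : X → X → Prop) (eqX_equiv : Equivalence eqX)
    (F : Set (X → ℝ))
    (hF_pres : ∀ f ∈ F, ∀ x x', eqX x x' → f x = f x')
    (eqY neqY : Y → Y → Prop) (eqY_equiv : Equivalence eqY)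
    (G : Set (Y → ℝ))
    (hG_pres : ∀ g ∈ G, ∀ y y', eqY y y' → g y = g y')
    (hneqY : ∀ y y', neqY y y' ↔ ∃ g ∈ G, g y ≠ g y')
    (hG_tight : ∀ y y', (∀ g ∈ G, g y = g y') → eqY y y')
    (h : X → Y)
    (h_pres : ∀ x x', eqX x x' → eqY (h x) (h x'))
    (h_affine : ∀ g ∈ G, (fun x => g (h x)) ∈ F) :
    -- h preserves the induced equality =_{(X,F)}
    (∀ x x', (∀ f ∈ F, f x = f x') → eqY (h x) (h x')) ∧
    -- h (as ρh) is affine from ρ_F X to (Y; G)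
    (∀ g ∈ G, (fun x => g (h x)) ∈ F) ∧
    -- h (as ρh) is strongly extensional w.r.t. ≠_{(Y,G)} and ≠_{(X,F)}
    (∀ x x', (∃ g ∈ G, g (h x) ≠ g (h x')) → ∃ f ∈ F, f x ≠ f x') ∧
    -- uniqueness: any two maps ρ_F X → Y agreeing pointwise with h agree pointwise
    (∀ h₁ h₂ : X → Y,
      (∀ x, eqY (h₁ x) (h x)) → (∀ x, eqY (h₂ x) (h x)) →
      ∀ x, eqY (h₁ x) (h₂ x)) := by
  refine ⟨?_, h_affine, ?_, ?_⟩
  · intro x x' hxx'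
    exact hG_tight _ _ fun g hg => hxx' _ (h_affine g hg)
  · rintro x x' ⟨g, hg, hne⟩
    exact ⟨_, h_affine g hg, hne⟩
  · intro h₁ h₂ hh₁ hh₂ x
    exact eqY_equiv.trans (hh₁ x) (eqY_equiv.symm (hh₂ x))
end

section
/- Let (X, =_X; F) be a function space, i.e., F is a set of =_X-preserving real-valued functions on X. Then the following are equivalent: (a) the inequality induced by F is tight, i.e., whenever f(x) = f(x') for every f ∈ F, it follows that x =_X x'; (b) there exists an affine embedding of (X, =_X; F) into the product ℝ^F, i.e., a map e : X → (F → ℝ) such that for every f ∈ F the function x ↦ e(x)(f) belongs to F (affineness: the composite of e with the projection pr_f lies in F), and such that (∀ f ∈ F, e(x)(f) = e(x')(f)) implies x =_X x' (embedding). Moreover, (a) implies that the evaluation map e(x)(f) := f(x) is such an affine embedding, it preserves equalities, and it is strongly extensional with respect to ≠_{(X,F)} and the inequality of ℝ^F (∃ f ∈ F, e(x)(f) ≠ e(x')(f)). -/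
/-- Set-theoretic Tychonoff embedding theorem: for a function space
(X, =_X; F), the inequality induced by F is tight if and only if there is an affine
embedding of (X, =_X; F) into ℝ^F; moreover, tightness implies that the evaluation map
e(x)(f) := f(x) is such an affine embedding, preserves equalities, and is strongly
extensional. -/
theorem tychonoff_embedding {X : Type*}
    (eqX : X → X → Prop) (eqX_equiv : Equivalence eqX)
    (F : Set (X → ℝ))
    (hF_pres : ∀ f ∈ F, ∀ x x', eqX x x' → f x = f x') :
    -- (a) ↔ (b)
    ((∀ x x', (∀ f ∈ F, f x = f x') → eqX x x') ↔
      (∃ e : X → (F → ℝ),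
        -- affine: each composite with a projection pr_f belongs to F
        (∀ f : F, (fun x => e x f) ∈ F) ∧
        -- embedding
        (∀ x x', (∀ f : F, e x f = e x' f) → eqX x x'))) ∧
    -- moreover, under (a) the evaluation map is such an affine embedding,
    -- preserves equalities, and is strongly extensional
    ((∀ x x', (∀ f ∈ F, f x = f x') → eqX x x') →
      ((∀ f : F, (fun x => (f : X → ℝ) x) ∈ F) ∧
       (∀ x x', (∀ f : F, (f : X → ℝ) x = (f : X → ℝ) x') → eqX x x') ∧
       (∀ x x', eqX x x' → ∀ f : F, (f : X → ℝ) x = (f : X → ℝ) x') ∧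
       (∀ x x', (∃ f : F, (f : X → ℝ) x ≠ (f : X → ℝ) x') → ∃ f ∈ F, f x ≠ f x'))) := by
  constructor
  · constructor
    · intro ha
      refine ⟨fun x f => (f : X → ℝ) x, ?_, ?_⟩
      · intro f; simpa using f.2
      · intro x x' h
        exact ha x x' (fun f hf => h ⟨f, hf⟩)
    · rintro ⟨e, haff, hemb⟩ x x' h
      exact hemb x x' (fun f => h _ (haff f))
  · intro ha
    refine ⟨fun f => by simpa using f.2, fun x x' h => ha x x' (fun f hf => h ⟨f, hf⟩),
      fun x x' hxx f => hF_pres f f.2 x x' hxx, ?_⟩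
    rintro x x' ⟨f, hf⟩
    exact ⟨f, f.2, hf⟩
end
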